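/- Let A, B be disjoint finite nonempty point sets in Euclidean space with |A| ≥ |B|, and let S ⊆ A with |S| > (3/7)|A|. Suppose d(ρ(S),ρ(A))²/d(ρ(S),ρ(B))² ≥ 49/121. Then Δ₁(A∖S) + Δ₁(S ∪ B) < Δ₁(A) + Δ₁(B); i.e., the partition (A∖S, S∪B) has strictly smaller 2-means cost than (A,B). (Assume S ≠ A and d(ρ(S),ρ(A)) > 0.) -/

import Mathlib

open Finset
open scoped Classical

noncomputable def centroid9 {d : ℕ} (S : Finset (EuclideanSpace ℝ (Fin d))) :
    EuclideanSpace ℝ (Fin d) := (S.card : ℝ)⁻¹ • ∑ v ∈ S, v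

noncomputable def oneMeans9 {d : ℕ} (S : Finset (EuclideanSpace ℝ (Fin d))) : ℝ :=
  ∑ u ∈ S, dist u (centroid9 S) ^ 2

section aux
variable {d : ℕ}

lemma sum_eq_card_smul_centroid (S : Finset (EuclideanSpace ℝ (Fin d))) :
    ∑ v ∈ S, v = (S.card : ℝ) • centroid9 S := by
  rcases eq_or_ne S ∅ with h | h
  · simp [h, centroid9]
  · have hc : (S.card : ℝ) ≠ 0 := by
      simpa using Finset.card_ne_zero_of_mem (Finset.nonempty_of_ne_empty h).choose_spec
    rw [centroid9, smul_smul, mul_inv_cancel₀ hc, one_smul]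

lemma biasvar (S : Finset (EuclideanSpace ℝ (Fin d))) (p : EuclideanSpace ℝ (Fin d)) :
    ∑ u ∈ S, dist u p ^ 2
      = oneMeans9 S + (S.card : ℝ) * dist (centroid9 S) p ^ 2 := by
  set ρ := centroid9 S with hρ
  have key : ∀ u : EuclideanSpace ℝ (Fin d), dist u p ^ 2
      = dist u ρ ^ 2 + 2 * (inner ℝ (u - ρ) (ρ - p) : ℝ) + dist ρ p ^ 2 := by
    intro u
    have h1 : u - p = (u - ρ) + (ρ - p) := by abel
    rw [dist_eq_norm, dist_eq_norm, dist_eq_norm, h1, @norm_add_sq_real]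
  rw [oneMeans9, Finset.sum_congr rfl fun u _ => key u]
  rw [Finset.sum_add_distrib, Finset.sum_add_distrib, Finset.sum_const, nsmul_eq_mul]
  have hz : ∑ u ∈ S, (2 * (inner ℝ (u - ρ) (ρ - p) : ℝ)) = 0 := by
    rw [← Finset.mul_sum, ← sum_inner]
    have h0 : ∑ u ∈ S, (u - ρ) = 0 := by
      rw [Finset.sum_sub_distrib, Finset.sum_const, sum_eq_card_smul_centroid,
        ← Nat.cast_smul_eq_nsmul ℝ, ← hρ, sub_self]
    rw [h0, inner_zero_left, mul_zero]
  rw [hz]; ring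

lemma centroid_union (X Y : Finset (EuclideanSpace ℝ (Fin d))) (hd : Disjoint X Y) :
    centroid9 (X ∪ Y)
      = ((X.card : ℝ) + Y.card)⁻¹ •
        ((X.card : ℝ) • centroid9 X + (Y.card : ℝ) • centroid9 Y) := by
  rw [centroid9, Finset.sum_union hd, Finset.card_union_of_disjoint hd,
    sum_eq_card_smul_centroid, sum_eq_card_smul_centroid, Nat.cast_add]

lemma dist_centroid_left (X Y : Finset (EuclideanSpace ℝ (Fin d)))
    (hd : Disjoint X Y) (hn : (X.card : ℝ) + Y.card ≠ 0) :
    dist (centroid9 X) (centroid9 (X ∪ Y))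
      = ((Y.card : ℝ) / ((X.card : ℝ) + Y.card)) * dist (centroid9 X) (centroid9 Y) := by
  have hm := centroid_union X Y hd
  rw [dist_eq_norm, dist_eq_norm]
  have h2 : centroid9 X - centroid9 (X ∪ Y)
      = ((Y.card : ℝ) / ((X.card : ℝ) + Y.card)) • (centroid9 X - centroid9 Y) := by
    rw [hm]
    match_scalars <;> field_simp <;> ring
  rw [h2, norm_smul, Real.norm_eq_abs, abs_of_nonneg (by positivity)]

lemma union_decomp (X Y : Finset (EuclideanSpace ℝ (Fin d)))
    (hd : Disjoint X Y) (hX : X.Nonempty) (hY : Y.Nonempty) :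
    oneMeans9 (X ∪ Y) = oneMeans9 X + oneMeans9 Y
      + ((X.card : ℝ) * Y.card / ((X.card : ℝ) + Y.card))
        * dist (centroid9 X) (centroid9 Y) ^ 2 := by
  have hx : (0 : ℝ) < X.card := by exact_mod_cast Finset.card_pos.2 hX
  have hy : (0 : ℝ) < Y.card := by exact_mod_cast Finset.card_pos.2 hY
  have hn : (X.card : ℝ) + Y.card ≠ 0 := by positivity
  have h1 : oneMeans9 (X ∪ Y) = ∑ u ∈ X, dist u (centroid9 (X ∪ Y)) ^ 2
      + ∑ u ∈ Y, dist u (centroid9 (X ∪ Y)) ^ 2 := by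
    rw [oneMeans9, Finset.sum_union hd]
  rw [h1, biasvar, biasvar]
  have hdx := dist_centroid_left X Y hd hn
  have hdy : dist (centroid9 Y) (centroid9 (X ∪ Y))
      = ((X.card : ℝ) / ((X.card : ℝ) + Y.card)) * dist (centroid9 X) (centroid9 Y) := by
    rw [Finset.union_comm, dist_centroid_left Y X hd.symm (by linarith), dist_comm]
    ring_nf
  rw [hdx, hdy]
  field_simp
  ring

end aux
set_option maxHeartbeats 2000000 in
theorem move_S_improves_two_means {k : ℕ}
    (A B S : Finset (EuclideanSpace ℝ (Fin k)))
    (hA : A.Nonempty) (hB : B.Nonempty) (hdisj : Disjoint A B)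
    (hKcard : (B.card : ℝ) ≤ A.card)
    (hSA : S ⊆ A) (hSne : S ≠ A)
    (hScard : (3 / 7 : ℝ) * A.card < S.card)
    (hratio : (49 : ℝ) / 121 ≤
      dist (centroid9 S) (centroid9 A) ^ 2 / dist (centroid9 S) (centroid9 B) ^ 2)
    (hpos : 0 < dist (centroid9 S) (centroid9 A)) :
    oneMeans9 (A \ S) + oneMeans9 (S ∪ B) < oneMeans9 A + oneMeans9 B := by
  set a : ℝ := (A.card : ℝ) with ha
  set s : ℝ := (S.card : ℝ) with hs
  set b : ℝ := (B.card : ℝ) with hb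
  have hapos : (0 : ℝ) < a := by rw [ha]; exact_mod_cast Finset.card_pos.2 hA
  have hbpos : (0 : ℝ) < b := by rw [hb]; exact_mod_cast Finset.card_pos.2 hB
  have hspos : (0 : ℝ) < s := by nlinarith
  have hSne' : S.Nonempty := by
    rw [← Finset.card_pos]
    have : (0 : ℝ) < (S.card : ℝ) := by rw [← hs]; exact hspos
    exact_mod_cast this
  have hRne : (A \ S).Nonempty :=
    Finset.sdiff_nonempty.2 (fun h => hSne (Finset.Subset.antisymm hSA h))
  have hrcard : (((A \ S).card : ℝ)) = a - s := by
    rw [Finset.card_sdiff, Finset.inter_eq_left.2 hSA, ha, hs]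
    push_cast [Finset.card_le_card hSA]
    ring
  have hrpos : (0 : ℝ) < a - s := by
    rw [← hrcard]; exact_mod_cast Finset.card_pos.2 hRne
  have hdisjRS : Disjoint (A \ S) S := Finset.sdiff_disjoint
  have hdisjSB : Disjoint S B := hdisj.mono_left hSA
  have hAeq : (A \ S) ∪ S = A := Finset.sdiff_union_of_subset hSA
  set D := dist (centroid9 (A \ S)) (centroid9 S) with hD
  set dSA := dist (centroid9 S) (centroid9 A) with hdsa
  set dSB := dist (centroid9 S) (centroid9 B) with hdsb
  have hdecA : oneMeans9 A = oneMeans9 (A \ S) + oneMeans9 S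
      + ((a - s) * s / a) * D ^ 2 := by
    have h := union_decomp (A \ S) S hdisjRS hRne hSne'
    rw [hAeq] at h
    rw [h, hrcard, ← hs, ← hD]
    have hsum : a - s + s = a := by ring
    rw [hsum]
  have hdecSB : oneMeans9 (S ∪ B) = oneMeans9 S + oneMeans9 B
      + (s * b / (s + b)) * dSB ^ 2 := by
    rw [union_decomp S B hdisjSB hSne' hB, ← hs, ← hb, ← hdsb]
  -- dSA in terms of D
  have hdSA : dSA = ((a - s) / a) * D := by
    have hAeq2 : S ∪ (A \ S) = A := by rw [Finset.union_comm]; exact hAeq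
    have hn : (S.card : ℝ) + ((A \ S).card : ℝ) ≠ 0 := by
      rw [hrcard, ← hs]; intro h; nlinarith
    have h := dist_centroid_left S (A \ S) hdisjRS.symm hn
    rw [hAeq2, hrcard, ← hs] at h
    rw [hdsa, h, dist_comm (centroid9 S), ← hD]
    have : s + (a - s) = a := by ring
    rw [this]
  have hDval : ((a - s) * s / a) * D ^ 2 = (s * a / (a - s)) * dSA ^ 2 := by
    rw [hdSA]
    field_simp
  -- dSB > 0
  have hdSBpos : (0 : ℝ) < dSB ^ 2 := by
    rcases lt_or_eq_of_le (sq_nonneg dSB) with h | h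
    · exact h
    · rw [← h, div_zero] at hratio; norm_num at hratio
  have hq : (49 / 121 : ℝ) * dSB ^ 2 ≤ dSA ^ 2 :=
    (le_div_iff₀ hdSBpos).mp hratio
  -- main inequality
  have hkey : (s * b / (s + b)) * dSB ^ 2 < (s * a / (a - s)) * dSA ^ 2 := by
    rw [div_mul_eq_mul_div, div_mul_eq_mul_div, div_lt_div_iff₀ (by positivity) hrpos]
    have p1 : 3 / 7 * a * a < s * a := by nlinarith
    have p2 : 3 / 7 * a * b < s * b := by nlinarith
    have p3 : b * a ≤ a * a := by nlinarith
    have core : 121 * (b * (a - s)) < 49 * (a * (s + b)) := by nlinarith [p1, p2, p3]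
    have hm : (0 : ℝ) < s * dSB ^ 2 := mul_pos hspos hdSBpos
    have step2 : s * b * dSB ^ 2 * (a - s) < s * a * (49 / 121 * dSB ^ 2) * (s + b) := by
      nlinarith [mul_lt_mul_of_pos_left core hm]
    have step1 : s * a * (49 / 121 * dSB ^ 2) * (s + b) ≤ s * a * dSA ^ 2 * (s + b) := by
      have h1 := mul_le_mul_of_nonneg_left hq (by positivity : (0:ℝ) ≤ s * a)
      have h2 := mul_le_mul_of_nonneg_right h1 (by positivity : (0:ℝ) ≤ s + b)
      linarith
    linarith
  rw [hdecA, hdecSB]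
  linarith [hkey, hDval]
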